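/- Let n be a nonzero integer and define q⁰(z) = (90ζ(3) − n²π⁴ + 9z²ζ(3))/z and q¹(z) = (90ζ(3) − n²π⁴ + 54z²ζ(3))/z². Then the function f(y) = (8·σ₂(|n|)/(9π|n|³)) · ( q⁰(π|n|y)·K₀(2π|n|y) + q¹(π|n|y)·K₁(2π|n|y) ) satisfies the ordinary differential equation y²·f''(y) − (12 + 4π²n²y²)·f(y) = −8π·( 2ζ(3)·y² + 4ζ(2) )·(σ₂(|n|)/|n|)·K₁(2π|n|y) for all y > 0. -/

import Mathlib

open Real

/-- Riemann zeta function for real arguments `s > 1`, as a sum. -/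
noncomputable def zetaR (s : ℝ) : ℝ := ∑' n : ℕ, 1 / ((n : ℝ) + 1) ^ s

/-- Modified Bessel function `K₀`. -/
noncomputable def K0 (x : ℝ) : ℝ := ∫ t in Set.Ioi (0 : ℝ), Real.exp (-x * Real.cosh t)

/-- Modified Bessel function `K₁`. -/
noncomputable def K1 (x : ℝ) : ℝ :=
  ∫ t in Set.Ioi (0 : ℝ), Real.exp (-x * Real.cosh t) * Real.cosh t

/-- Divisor sum `σ₂(m) = ∑_{d ∣ m} d²`. -/
def sigma2 (m : ℕ) : ℕ := ∑ d ∈ m.divisors, d ^ 2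

/-- The coefficient `q⁰`. -/
noncomputable def q0 (n : ℤ) (z : ℝ) : ℝ :=
  (90 * zetaR 3 - (n : ℝ) ^ 2 * π ^ 4 + 9 * z ^ 2 * zetaR 3) / z

/-- The coefficient `q¹`. -/
noncomputable def q1 (n : ℤ) (z : ℝ) : ℝ :=
  (90 * zetaR 3 - (n : ℝ) ^ 2 * π ^ 4 + 54 * z ^ 2 * zetaR 3) / z ^ 2

/-- The particular solution `f̂^P_{n,0}`. -/
noncomputable def fP (n : ℤ) (y : ℝ) : ℝ :=
  8 * (sigma2 n.natAbs : ℝ) / (9 * π * |(n : ℝ)| ^ 3) *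
    (q0 n (π * |(n : ℝ)| * y) * K0 (2 * π * |(n : ℝ)| * y) +
      q1 n (π * |(n : ℝ)| * y) * K1 (2 * π * |(n : ℝ)| * y))

open MeasureTheory Set Filter


noncomputable def Km (m : ℕ) (x : ℝ) : ℝ :=
  ∫ t in Set.Ioi (0 : ℝ), Real.exp (-x * Real.cosh t) * Real.cosh t ^ m

lemma pow_le_factorial_mul_exp (k : ℕ) {u : ℝ} (hu : 0 ≤ u) :
    u ^ k ≤ (k.factorial : ℝ) * Real.exp u := by
  have h := Real.sum_le_exp_of_nonneg hu (k + 1)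
  have h2 : u ^ k / (k.factorial : ℝ) ≤ ∑ i ∈ Finset.range (k + 1), u ^ i / i.factorial := by
    exact Finset.single_le_sum (f := fun i => u ^ i / (i.factorial : ℝ))
      (fun i _ => by positivity) (Finset.self_mem_range_succ k)
  have h3 : u ^ k / (k.factorial : ℝ) ≤ Real.exp u := h2.trans h
  have hk : (0:ℝ) < k.factorial := by positivity
  calc u ^ k = u ^ k / k.factorial * k.factorial := by field_simp
    _ ≤ Real.exp u * k.factorial := by gcongr
    _ = k.factorial * Real.exp u := by ring

/-- key bound: cosh t ^ k * exp (-c cosh t) ≤ k! (2/c)^k exp(-(c/2) t) for t ≥ 0 -/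
lemma cosh_pow_exp_bound (k : ℕ) {c : ℝ} (hc : 0 < c) {t : ℝ} (ht : 0 ≤ t) :
    Real.cosh t ^ k * Real.exp (-c * Real.cosh t)
      ≤ (k.factorial : ℝ) * (2 / c) ^ k * Real.exp (-(c / 2) * t) := by
  have h1 : (1:ℝ) ≤ Real.cosh t := Real.one_le_cosh t
  have hct : t ≤ Real.cosh t := by
    calc t ≤ Real.sinh t := by
            rcases eq_or_lt_of_le ht with h | h
            · simp [← h]
            · exact (Real.self_lt_sinh_iff.2 h).le
      _ ≤ Real.cosh t := by
            rw [Real.sinh_eq, Real.cosh_eq]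
            nlinarith [Real.exp_pos (-t)]
  have key : Real.cosh t ^ k ≤ (k.factorial : ℝ) * (2 / c) ^ k * Real.exp ((c/2) * Real.cosh t) := by
    have := pow_le_factorial_mul_exp k (u := c/2 * Real.cosh t) (by positivity)
    have h2 : (c/2 * Real.cosh t) ^ k = (c/2)^k * Real.cosh t ^ k := by rw [mul_pow]
    rw [h2] at this
    have hck : (0:ℝ) < (c/2)^k := by positivity
    calc Real.cosh t ^ k = ((c/2)^k * Real.cosh t ^ k) / (c/2)^k := by field_simp
      _ ≤ ((k.factorial : ℝ) * Real.exp (c/2 * Real.cosh t)) / (c/2)^k := by gcongr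
      _ = (k.factorial : ℝ) * (2/c) ^ k * Real.exp ((c/2) * Real.cosh t) := by
          rw [div_pow]; field_simp; rw [mul_comm, ← mul_pow, div_mul_cancel₀ (2:ℝ) hc.ne']
  calc Real.cosh t ^ k * Real.exp (-c * Real.cosh t)
      ≤ ((k.factorial : ℝ) * (2 / c) ^ k * Real.exp ((c/2) * Real.cosh t)) *
          Real.exp (-c * Real.cosh t) := by
        have := Real.exp_pos (-c * Real.cosh t)
        gcongr
    _ = (k.factorial : ℝ) * (2 / c) ^ k * Real.exp (-(c/2) * Real.cosh t) := by
        rw [mul_assoc, ← Real.exp_add]; ring_nf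
    _ ≤ (k.factorial : ℝ) * (2 / c) ^ k * Real.exp (-(c/2) * t) := by
        have hE : Real.exp (-(c/2) * Real.cosh t) ≤ Real.exp (-(c/2) * t) := by
          rw [Real.exp_le_exp]; nlinarith
        have : (0:ℝ) ≤ (k.factorial : ℝ) * (2 / c) ^ k := by positivity
        exact mul_le_mul_of_nonneg_left hE this

lemma integrableOn_Km (k : ℕ) {c : ℝ} (hc : 0 < c) :
    IntegrableOn (fun t => Real.exp (-c * Real.cosh t) * Real.cosh t ^ k) (Set.Ioi (0:ℝ)) := by
  have hcont : Continuous fun t => Real.exp (-c * Real.cosh t) * Real.cosh t ^ k := by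
    continuity
  refine Integrable.mono' ((exp_neg_integrableOn_Ioi 0 (by positivity : (0:ℝ) < c/2)).const_mul
    ((k.factorial : ℝ) * (2 / c) ^ k)) hcont.aestronglyMeasurable ?_
  filter_upwards [ae_restrict_mem measurableSet_Ioi] with t ht
  have ht' : (0:ℝ) ≤ t := (le_of_lt ht)
  have hb := cosh_pow_exp_bound k hc ht'
  rw [Real.norm_eq_abs, abs_of_nonneg (by positivity)]
  calc Real.exp (-c * Real.cosh t) * Real.cosh t ^ k
      = Real.cosh t ^ k * Real.exp (-c * Real.cosh t) := by ring
    _ ≤ (k.factorial : ℝ) * (2 / c) ^ k * Real.exp (-(c / 2) * t) := hb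

lemma hasDerivAt_Km (k : ℕ) {x : ℝ} (hx : 0 < x) :
    HasDerivAt (Km k) (-(Km (k+1) x)) x := by
  have hε : (0:ℝ) < x/2 := by positivity
  have key := hasDerivAt_integral_of_dominated_loc_of_deriv_le
    (F := fun (s : ℝ) (t : ℝ) => Real.exp (-s * Real.cosh t) * Real.cosh t ^ k)
    (F' := fun (s : ℝ) (t : ℝ) => -(Real.exp (-s * Real.cosh t) * Real.cosh t ^ (k+1)))
    (x₀ := x) (s := Metric.ball x (x/2))
    (bound := fun t => (k+1).factorial * (2 / (x/2)) ^ (k+1) * Real.exp (-((x/2) / 2) * t))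
    (μ := volume.restrict (Set.Ioi (0:ℝ))) (Metric.ball_mem_nhds x hε) ?_ ?_ ?_ ?_ ?_ ?_
  · have h2 : HasDerivAt (fun s => ∫ t in Set.Ioi (0:ℝ),
        Real.exp (-s * Real.cosh t) * Real.cosh t ^ k)
        (∫ t in Set.Ioi (0:ℝ), -(Real.exp (-x * Real.cosh t) * Real.cosh t ^ (k+1))) x := key.2
    rw [integral_neg] at h2
    exact h2
  · filter_upwards with s
    exact (Continuous.aestronglyMeasurable (by continuity))
  · exact integrableOn_Km k hx
  · exact (Continuous.aestronglyMeasurable (by continuity))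
  · filter_upwards [ae_restrict_mem measurableSet_Ioi] with t ht s hs
    have ht' : (0:ℝ) ≤ t := le_of_lt ht
    have hs' : x/2 < s := by
      have := abs_lt.1 (mem_ball_iff_norm.1 hs); linarith [this.1]
    rw [Real.norm_eq_abs, abs_neg, abs_of_nonneg (by positivity)]
    calc Real.exp (-s * Real.cosh t) * Real.cosh t ^ (k+1)
        ≤ Real.exp (-(x/2) * Real.cosh t) * Real.cosh t ^ (k+1) := by
          have h1 : (1:ℝ) ≤ Real.cosh t := Real.one_le_cosh t
          have : Real.exp (-s * Real.cosh t) ≤ Real.exp (-(x/2) * Real.cosh t) := by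
            rw [Real.exp_le_exp]; nlinarith
          have h2 : (0:ℝ) ≤ Real.cosh t ^ (k+1) := by positivity
          exact mul_le_mul_of_nonneg_right this h2
      _ = Real.cosh t ^ (k+1) * Real.exp (-(x/2) * Real.cosh t) := by ring
      _ ≤ _ := cosh_pow_exp_bound (k+1) hε ht'
  · exact (exp_neg_integrableOn_Ioi 0 (by positivity : (0:ℝ) < (x/2)/2)).const_mul _
  · filter_upwards with t s _
    have h : HasDerivAt (fun s : ℝ => -s * Real.cosh t) (-Real.cosh t) s := by
      simpa using (hasDerivAt_id s).neg.mul_const (Real.cosh t)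
    have := (h.exp).mul_const (Real.cosh t ^ k)
    refine this.congr_deriv ?_
    ring

set_option maxHeartbeats 1000000 in
lemma Km_ibp {x : ℝ} (hx : 0 < x) : x * Km 2 x = x * Km 0 x + Km 1 x := by
  have hderiv : ∀ t : ℝ, HasDerivAt (fun t => Real.exp (-x * Real.cosh t) * Real.sinh t)
      (Real.exp (-x * Real.cosh t) * Real.cosh t ^ 1
        - x * (Real.exp (-x * Real.cosh t) * Real.cosh t ^ 2)
        + x * (Real.exp (-x * Real.cosh t) * Real.cosh t ^ 0)) t := by
    intro t
    have h : HasDerivAt (fun t : ℝ => -x * Real.cosh t) (-x * Real.sinh t) t :=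
      (Real.hasDerivAt_cosh t).const_mul (-x)
    have h2 := (h.exp).mul (Real.hasDerivAt_sinh t)
    refine h2.congr_deriv ?_; symm
    have hs : Real.sinh t ^ 2 = Real.cosh t ^ 2 - 1 := Real.sinh_sq t
    linear_combination (x * Real.exp (-x * Real.cosh t)) * hs
  have hi1 := integrableOn_Km 1 hx
  have hi2 := integrableOn_Km 2 hx
  have hi0 := integrableOn_Km 0 hx
  have hi2c : IntegrableOn (fun t => x * (Real.exp (-x * Real.cosh t) * Real.cosh t ^ 2))
      (Set.Ioi (0:ℝ)) := hi2.const_mul x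
  have hi0c : IntegrableOn (fun t => x * (Real.exp (-x * Real.cosh t) * Real.cosh t ^ 0))
      (Set.Ioi (0:ℝ)) := hi0.const_mul x
  have hsub : IntegrableOn (fun t => Real.exp (-x * Real.cosh t) * Real.cosh t ^ 1
      - x * (Real.exp (-x * Real.cosh t) * Real.cosh t ^ 2)) (Set.Ioi (0:ℝ)) := hi1.sub hi2c
  have hint : IntegrableOn (fun t => Real.exp (-x * Real.cosh t) * Real.cosh t ^ 1
      - x * (Real.exp (-x * Real.cosh t) * Real.cosh t ^ 2)
      + x * (Real.exp (-x * Real.cosh t) * Real.cosh t ^ 0)) (Set.Ioi (0:ℝ)) := hsub.add hi0c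
  have htend : Tendsto (fun t => Real.exp (-x * Real.cosh t) * Real.sinh t) atTop (nhds 0) := by
    apply squeeze_zero_norm' (a := fun t => (2/x) * Real.exp (-(x/2) * t))
    · filter_upwards [eventually_ge_atTop (0:ℝ)] with t ht
      have h1 : |Real.exp (-x * Real.cosh t) * Real.sinh t|
          ≤ Real.cosh t * Real.exp (-x * Real.cosh t) := by
        rw [abs_mul, abs_of_pos (Real.exp_pos _), abs_of_nonneg (Real.sinh_nonneg_iff.2 ht)]
        have : Real.sinh t ≤ Real.cosh t := by
          rw [Real.sinh_eq, Real.cosh_eq]; nlinarith [Real.exp_pos (-t)]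
        nlinarith [Real.exp_pos (-x * Real.cosh t)]
      have h2 := cosh_pow_exp_bound 1 hx ht
      simp only [pow_one, Nat.factorial_one, Nat.cast_one, one_mul] at h2
      rw [Real.norm_eq_abs]
      exact h1.trans h2
    · have hlin : Tendsto (fun t : ℝ => (x/2) * t) atTop atTop :=
        Tendsto.const_mul_atTop (by positivity) tendsto_id
      have h2 : Tendsto (fun t : ℝ => Real.exp (-((x/2) * t))) atTop (nhds 0) :=
        Real.tendsto_exp_neg_atTop_nhds_zero.comp hlin
      have h3 : Tendsto (fun t : ℝ => (2/x) * Real.exp (-(x/2) * t)) atTop (nhds 0) := by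
        simpa [neg_mul] using h2.const_mul (2/x)
      simpa using h3
  have h0 := integral_Ioi_of_hasDerivAt_of_tendsto
    (f := fun t => Real.exp (-x * Real.cosh t) * Real.sinh t)
    ((hderiv 0).continuousAt.continuousWithinAt) (fun t _ => hderiv t) hint htend
  simp only [Real.cosh_zero, Real.sinh_zero, mul_zero, sub_zero, zero_sub, neg_zero] at h0
  rw [integral_add hsub hi0c, integral_sub hi1 hi2c,
    integral_const_mul, integral_const_mul] at h0
  have e1 : ∫ t in Set.Ioi (0:ℝ), Real.exp (-x * Real.cosh t) * Real.cosh t ^ 1 = Km 1 x := rfl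
  have e2 : ∫ t in Set.Ioi (0:ℝ), Real.exp (-x * Real.cosh t) * Real.cosh t ^ 2 = Km 2 x := rfl
  have e0 : ∫ t in Set.Ioi (0:ℝ), Real.exp (-x * Real.cosh t) * Real.cosh t ^ 0 = Km 0 x := rfl
  rw [e1, e2, e0] at h0
  linarith



lemma K0_eq_Km (x : ℝ) : K0 x = Km 0 x := by
  unfold K0 Km; simp
lemma K1_eq_Km (x : ℝ) : K1 x = Km 1 x := by
  unfold K1 Km; simp

lemma hasDerivAt_K0 {x : ℝ} (hx : 0 < x) : HasDerivAt K0 (-(K1 x)) x := by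
  have h := hasDerivAt_Km 0 hx
  rw [show K1 x = Km 1 x from K1_eq_Km x]
  have : K0 = Km 0 := funext K0_eq_Km
  rw [this]
  exact h

lemma hasDerivAt_K1 {x : ℝ} (hx : 0 < x) :
    HasDerivAt K1 (-(K0 x) - K1 x / x) x := by
  have h := hasDerivAt_Km 1 hx
  have hibp := Km_ibp hx
  have h2 : -(Km 2 x) = -(K0 x) - K1 x / x := by
    rw [K0_eq_Km, K1_eq_Km]
    field_simp
    linarith
  have h3 : HasDerivAt K1 (-(Km 2 x)) x := by
    rw [show K1 = Km 1 from funext K1_eq_Km]; exact h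
  rwa [h2] at h3


lemma zetaR_two : zetaR 2 = π ^ 2 / 6 := by
  unfold zetaR
  have h := hasSum_zeta_two
  have h2 : HasSum (fun n : ℕ => (1 : ℝ) / ((n : ℝ) + 1) ^ 2) (π ^ 2 / 6) := by
    have h' : HasSum (fun n : ℕ => (1:ℝ) / (n : ℝ) ^ 2)
        (π ^ 2 / 6 + ∑ i ∈ Finset.range 1, (1:ℝ) / (i : ℝ) ^ 2) := by simpa using h
    have h'' := (hasSum_nat_add_iff (f := fun n : ℕ => (1 : ℝ) / (n : ℝ) ^ 2) 1).2 h'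
    simpa using h''
  have h3 : (fun n : ℕ => (1:ℝ) / ((n : ℝ) + 1) ^ (2:ℝ)) =
      fun n : ℕ => (1:ℝ) / ((n : ℝ) + 1) ^ (2:ℕ) := by
    funext n
    rw [show (2:ℝ) = ((2:ℕ):ℝ) by norm_num, Real.rpow_natCast]
  rw [h3]
  exact h2.tsum_eq





noncomputable def AA (n : ℤ) : ℝ := 90 * zetaR 3 - (n : ℝ) ^ 2 * π ^ 4

noncomputable def FF1 (n : ℤ) (y : ℝ) : ℝ :=
  8 * (sigma2 n.natAbs : ℝ) / (9 * π * |(n : ℝ)| ^ 3) *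
    ((-3 * AA n / (π * |(n : ℝ)| * y ^ 2) - 99 * (π * |(n : ℝ)|) * zetaR 3) *
        K0 (2 * π * |(n : ℝ)| * y) +
      (-2 * AA n / y - 54 * zetaR 3 / y - 3 * AA n / ((π * |(n : ℝ)|) ^ 2 * y ^ 3)
          - 18 * (π * |(n : ℝ)|) ^ 2 * zetaR 3 * y) * K1 (2 * π * |(n : ℝ)| * y))

noncomputable def FF2 (n : ℤ) (y : ℝ) : ℝ :=
  8 * (sigma2 n.natAbs : ℝ) / (9 * π * |(n : ℝ)| ^ 3) *
    ((12 * AA n / (π * |(n : ℝ)| * y ^ 3) + 4 * (π * |(n : ℝ)|) * AA n / y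
        + 108 * (π * |(n : ℝ)|) * zetaR 3 / y + 36 * (π * |(n : ℝ)|) ^ 3 * zetaR 3 * y) *
        K0 (2 * π * |(n : ℝ)| * y) +
      (10 * AA n / y ^ 2 + 108 * zetaR 3 / y ^ 2 + 12 * AA n / ((π * |(n : ℝ)|) ^ 2 * y ^ 4)
          + 198 * (π * |(n : ℝ)|) ^ 2 * zetaR 3) * K1 (2 * π * |(n : ℝ)| * y))

lemma abs_pos_of_ne {n : ℤ} (hn : n ≠ 0) : 0 < |(n : ℝ)| := by
  have h : ((n : ℝ)) ≠ 0 := Int.cast_ne_zero.mpr hn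
  exact abs_pos.mpr h

lemma hasDerivAt_fP (n : ℤ) (hn : n ≠ 0) {y : ℝ} (hy : 0 < y) :
    HasDerivAt (fP n) (FF1 n y) y := by
  have hN : 0 < |(n : ℝ)| := abs_pos_of_ne hn
  have hay : 0 < π * |(n : ℝ)| * y := by positivity
  have h2ay : 0 < 2 * π * |(n : ℝ)| * y := by positivity
  -- inner linear maps
  have hlin : HasDerivAt (fun y : ℝ => π * |(n : ℝ)| * y) (π * |(n : ℝ)|) y := by
    simpa using (hasDerivAt_id y).const_mul (π * |(n : ℝ)|)
  have hlin2 : HasDerivAt (fun y : ℝ => 2 * π * |(n : ℝ)| * y) (2 * π * |(n : ℝ)|) y := by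
    simpa using (hasDerivAt_id y).const_mul (2 * π * |(n : ℝ)|)
  have hK0 : HasDerivAt (fun y : ℝ => K0 (2 * π * |(n : ℝ)| * y))
      (-(K1 (2 * π * |(n : ℝ)| * y)) * (2 * π * |(n : ℝ)|)) y :=
    (hasDerivAt_K0 h2ay).comp y hlin2
  have hK1 : HasDerivAt (fun y : ℝ => K1 (2 * π * |(n : ℝ)| * y))
      ((-(K0 (2 * π * |(n : ℝ)| * y)) - K1 (2 * π * |(n : ℝ)| * y) / (2 * π * |(n : ℝ)| * y))
        * (2 * π * |(n : ℝ)|)) y :=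
    (hasDerivAt_K1 h2ay).comp y hlin2
  -- numerators
  have hnum0 : HasDerivAt (fun y : ℝ => 90 * zetaR 3 - (n : ℝ) ^ 2 * π ^ 4
      + 9 * (π * |(n : ℝ)| * y) ^ 2 * zetaR 3)
      (9 * (2 * (π * |(n : ℝ)| * y) ^ 1 * (π * |(n : ℝ)|)) * zetaR 3) y := by
    exact (((hlin.pow 2).const_mul 9).mul_const (zetaR 3)).const_add _
  have hnum1 : HasDerivAt (fun y : ℝ => 90 * zetaR 3 - (n : ℝ) ^ 2 * π ^ 4
      + 54 * (π * |(n : ℝ)| * y) ^ 2 * zetaR 3)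
      (54 * (2 * (π * |(n : ℝ)| * y) ^ 1 * (π * |(n : ℝ)|)) * zetaR 3) y := by
    exact (((hlin.pow 2).const_mul 54).mul_const (zetaR 3)).const_add _
  -- q0 ∘ (π|n|·) and q1 ∘ (π|n|·)
  have hq0 : HasDerivAt (fun y : ℝ => q0 n (π * |(n : ℝ)| * y))
      ((9 * (2 * (π * |(n : ℝ)| * y) ^ 1 * (π * |(n : ℝ)|)) * zetaR 3 * (π * |(n : ℝ)| * y)
        - (90 * zetaR 3 - (n : ℝ) ^ 2 * π ^ 4 + 9 * (π * |(n : ℝ)| * y) ^ 2 * zetaR 3)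
            * (π * |(n : ℝ)|)) / (π * |(n : ℝ)| * y) ^ 2) y := by
    exact hnum0.div hlin (ne_of_gt hay)
  have hq1 : HasDerivAt (fun y : ℝ => q1 n (π * |(n : ℝ)| * y))
      ((54 * (2 * (π * |(n : ℝ)| * y) ^ 1 * (π * |(n : ℝ)|)) * zetaR 3 * (π * |(n : ℝ)| * y) ^ 2
        - (90 * zetaR 3 - (n : ℝ) ^ 2 * π ^ 4 + 54 * (π * |(n : ℝ)| * y) ^ 2 * zetaR 3)
            * (2 * (π * |(n : ℝ)| * y) ^ 1 * (π * |(n : ℝ)|))) / ((π * |(n : ℝ)| * y) ^ 2) ^ 2)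
      y := by
    exact hnum1.div (hlin.pow 2) (by positivity)
  have hmain := ((hq0.mul hK0).add (hq1.mul hK1)).const_mul
    (8 * (sigma2 n.natAbs : ℝ) / (9 * π * |(n : ℝ)| ^ 3))
  have hfun : fP n = fun y : ℝ => 8 * (sigma2 n.natAbs : ℝ) / (9 * π * |(n : ℝ)| ^ 3) *
      (q0 n (π * |(n : ℝ)| * y) * K0 (2 * π * |(n : ℝ)| * y) +
        q1 n (π * |(n : ℝ)| * y) * K1 (2 * π * |(n : ℝ)| * y)) := rfl
  rw [hfun]
  refine hmain.congr_deriv ?_; symm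
  unfold FF1 AA q0 q1
  have hπ : (0:ℝ) < π := Real.pi_pos
  field_simp
  ring

lemma hasDerivAt_FF1 (n : ℤ) (hn : n ≠ 0) {y : ℝ} (hy : 0 < y) :
    HasDerivAt (FF1 n) (FF2 n y) y := by
  have hN : 0 < |(n : ℝ)| := abs_pos_of_ne hn
  have h2ay : 0 < 2 * π * |(n : ℝ)| * y := by positivity
  have hπ : (0:ℝ) < π := Real.pi_pos
  have hlin2 : HasDerivAt (fun y : ℝ => 2 * π * |(n : ℝ)| * y) (2 * π * |(n : ℝ)|) y := by
    simpa using (hasDerivAt_id y).const_mul (2 * π * |(n : ℝ)|)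
  have hK0 : HasDerivAt (fun y : ℝ => K0 (2 * π * |(n : ℝ)| * y))
      (-(K1 (2 * π * |(n : ℝ)| * y)) * (2 * π * |(n : ℝ)|)) y :=
    (hasDerivAt_K0 h2ay).comp y hlin2
  have hK1 : HasDerivAt (fun y : ℝ => K1 (2 * π * |(n : ℝ)| * y))
      ((-(K0 (2 * π * |(n : ℝ)| * y)) - K1 (2 * π * |(n : ℝ)| * y) / (2 * π * |(n : ℝ)| * y))
        * (2 * π * |(n : ℝ)|)) y :=
    (hasDerivAt_K1 h2ay).comp y hlin2
  -- coefficient of K0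
  have hden2 : HasDerivAt (fun y : ℝ => π * |(n : ℝ)| * y ^ 2)
      (π * |(n : ℝ)| * ((2:ℕ) * y ^ 1)) y := (hasDerivAt_pow 2 y).const_mul (π * |(n : ℝ)|)
  have hc0 : HasDerivAt (fun y : ℝ => -3 * AA n / (π * |(n : ℝ)| * y ^ 2)
      - 99 * (π * |(n : ℝ)|) * zetaR 3)
      ((0 * (π * |(n : ℝ)| * y ^ 2) - -3 * AA n * (π * |(n : ℝ)| * ((2:ℕ) * y ^ 1)))
        / (π * |(n : ℝ)| * y ^ 2) ^ 2) y := by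
    exact (HasDerivAt.div (hasDerivAt_const y (-3 * AA n)) hden2 (by positivity)).sub_const _
  -- coefficient of K1
  have hden3 : HasDerivAt (fun y : ℝ => (π * |(n : ℝ)|) ^ 2 * y ^ 3)
      ((π * |(n : ℝ)|) ^ 2 * ((3:ℕ) * y ^ 2)) y :=
    (hasDerivAt_pow 3 y).const_mul ((π * |(n : ℝ)|) ^ 2)
  have ht1 : HasDerivAt (fun y : ℝ => -2 * AA n / y)
      ((0 * y - -2 * AA n * 1) / y ^ 2) y :=
    HasDerivAt.div (hasDerivAt_const y (-2 * AA n)) (hasDerivAt_id y) hy.ne'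
  have ht2 : HasDerivAt (fun y : ℝ => 54 * zetaR 3 / y)
      ((0 * y - 54 * zetaR 3 * 1) / y ^ 2) y :=
    HasDerivAt.div (hasDerivAt_const y (54 * zetaR 3)) (hasDerivAt_id y) hy.ne'
  have ht3 : HasDerivAt (fun y : ℝ => 3 * AA n / ((π * |(n : ℝ)|) ^ 2 * y ^ 3))
      ((0 * ((π * |(n : ℝ)|) ^ 2 * y ^ 3) - 3 * AA n * ((π * |(n : ℝ)|) ^ 2 * ((3:ℕ) * y ^ 2)))
        / ((π * |(n : ℝ)|) ^ 2 * y ^ 3) ^ 2) y :=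
    HasDerivAt.div (hasDerivAt_const y (3 * AA n)) hden3 (by positivity)
  have ht4 : HasDerivAt (fun y : ℝ => 18 * (π * |(n : ℝ)|) ^ 2 * zetaR 3 * y)
      (18 * (π * |(n : ℝ)|) ^ 2 * zetaR 3) y := by
    simpa using (hasDerivAt_id y).const_mul (18 * (π * |(n : ℝ)|) ^ 2 * zetaR 3)
  have hc1 := ((ht1.sub ht2).sub ht3).sub ht4
  have hmain := ((hc0.mul hK0).add (hc1.mul hK1)).const_mul
    (8 * (sigma2 n.natAbs : ℝ) / (9 * π * |(n : ℝ)| ^ 3))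
  have hfun : FF1 n = fun y : ℝ => 8 * (sigma2 n.natAbs : ℝ) / (9 * π * |(n : ℝ)| ^ 3) *
      ((-3 * AA n / (π * |(n : ℝ)| * y ^ 2) - 99 * (π * |(n : ℝ)|) * zetaR 3) *
          K0 (2 * π * |(n : ℝ)| * y) +
        (-2 * AA n / y - 54 * zetaR 3 / y - 3 * AA n / ((π * |(n : ℝ)|) ^ 2 * y ^ 3)
            - 18 * (π * |(n : ℝ)|) ^ 2 * zetaR 3 * y) * K1 (2 * π * |(n : ℝ)| * y)) := rfl
  rw [hfun]
  refine hmain.congr_deriv ?_; symm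
  unfold FF2 AA
  simp only [Pi.sub_apply]
  field_simp
  ring

/-- the function `fP n` solves the inhomogeneous ODE for the
`(n,0)` mode. -/
theorem mode_n0_ode (n : ℤ) (hn : n ≠ 0) :
    ∀ y : ℝ, 0 < y →
      y ^ 2 * deriv (deriv (fP n)) y - (12 + 4 * π ^ 2 * (n : ℝ) ^ 2 * y ^ 2) * fP n y
      = -8 * π * (2 * zetaR 3 * y ^ 2 + 4 * zetaR 2) * ((sigma2 n.natAbs : ℝ) / |(n : ℝ)|) *
          K1 (2 * π * |(n : ℝ)| * y) := by
  intro y hy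
  have hN : 0 < |(n : ℝ)| := abs_pos_of_ne hn
  have hπ : (0:ℝ) < π := Real.pi_pos
  have hd2 : deriv (deriv (fP n)) y = FF2 n y := by
    have hev : deriv (fP n) =ᶠ[nhds y] FF1 n := by
      filter_upwards [Ioi_mem_nhds hy] with z hz
      exact (hasDerivAt_fP n hn hz).deriv
    rw [hev.deriv_eq, (hasDerivAt_FF1 n hn hy).deriv]
  rw [hd2, zetaR_two]
  unfold FF2 fP q0 q1 AA
  generalize hK0 : K0 (2 * π * |(n : ℝ)| * y) = P
  generalize hK1 : K1 (2 * π * |(n : ℝ)| * y) = Q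
  obtain ⟨m, hmdef, hm⟩ : ∃ m : ℝ, m = |(n : ℝ)| ∧ 0 < m := ⟨|(n : ℝ)|, rfl, hN⟩
  rw [← hmdef]
  have hn2 : ((n:ℝ)) ^ 2 = m ^ 2 := by rw [hmdef]; exact (sq_abs _).symm
  rw [hn2]
  field_simp
  ring
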